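/- arXiv:2605.01576 — 3 statements merged into one kernel-verified Lean document; each statement's English description precedes it below -/
import Mathlib

section
/- Let ψ : ℝ → ℝ be a square-integrable real function and let g : ℝ → ℝ be differentiable, with all integrals below finite. Define A = ∫ ψ(p)²/p⁴ dp, B = 2∫ g'(p)·ψ(p)²/p² dp, and C = ∫ (ℏ²·ψ'(p)² + g'(p)²·ψ(p)²) dp, where ℏ > 0. If ψ is not identically zero and ψ' is not identically zero (in L²), then the discriminant satisfies B² < 4·A·C, so the quadratic τ ↦ A·τ² + B·τ + C is strictly positive for all real τ. -/
open MeasureTheory Real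

lemma my_cauchy (f h : ℝ → ℝ) (hf2 : Integrable (fun p => f p ^ 2))
    (hh2 : Integrable (fun p => h p ^ 2)) (hfh : Integrable (fun p => f p * h p)) :
    (∫ p : ℝ, f p * h p) ^ 2 ≤ (∫ p : ℝ, f p ^ 2) * (∫ p : ℝ, h p ^ 2) := by
  set F := ∫ p : ℝ, f p ^ 2 with hF
  set P := ∫ p : ℝ, f p * h p with hP
  set H := ∫ p : ℝ, h p ^ 2 with hH
  have key : ∀ t : ℝ, 0 ≤ F * (t * t) + (2 * P) * t + H := by
    intro t
    have i1 : Integrable (fun p : ℝ => t ^ 2 * f p ^ 2 + (2 * t) * (f p * h p)) :=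
      (hf2.const_mul _).add (hfh.const_mul _)
    have h0 : 0 ≤ ∫ p : ℝ, (t ^ 2 * f p ^ 2 + (2 * t) * (f p * h p) + h p ^ 2) := by
      apply integral_nonneg
      intro p
      simp only [Pi.zero_apply]
      nlinarith [sq_nonneg (t * f p + h p)]
    rw [integral_add i1 hh2, integral_add (hf2.const_mul _) (hfh.const_mul _),
        integral_const_mul, integral_const_mul] at h0
    rw [← hF, ← hP, ← hH] at h0
    nlinarith [h0]
  have hd := discrim_le_zero key
  rw [discrim] at hd
  nlinarith [hd]

lemma my_int_sq_pos (f : ℝ → ℝ) (hf : Integrable (fun p => f p ^ 2))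
    (hne : ¬ (∀ᵐ p : ℝ ∂volume, f p = 0)) : 0 < ∫ p : ℝ, f p ^ 2 := by
  rw [integral_pos_iff_support_of_nonneg (fun p => sq_nonneg (f p)) hf]
  have hs : Function.support (fun p => f p ^ 2) = Function.support f := by
    ext p; simp [Function.support, pow_eq_zero_iff]
  rw [hs, pos_iff_ne_zero]
  intro h0
  apply hne
  rw [ae_iff]
  simpa [Function.support] using h0

/-- Strict positivity of the gauge-invariant area expectation value:
the discriminant of the quadratic in relational time is strictly negative. -/
theorem area_quadratic_pos
    (ψ g : ℝ → ℝ) (ℏ : ℝ) (hℏ : 0 < ℏ)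
    (hψdiff : Differentiable ℝ ψ) (hgdiff : Differentiable ℝ g)
    (hψL2 : Integrable (fun p => ψ p ^ 2))
    (hψ'L2 : Integrable (fun p => (deriv ψ p) ^ 2))
    (hA : Integrable (fun p => ψ p ^ 2 / p ^ 4))
    (hB : Integrable (fun p => deriv g p * ψ p ^ 2 / p ^ 2))
    (hC : Integrable (fun p => ℏ ^ 2 * (deriv ψ p) ^ 2 + (deriv g p) ^ 2 * ψ p ^ 2))
    (hgψL2 : Integrable (fun p => (deriv g p * ψ p) ^ 2))
    (hψne : ¬ (∀ᵐ p : ℝ ∂volume, ψ p = 0))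
    (hψ'ne : ¬ (∀ᵐ p : ℝ ∂volume, deriv ψ p = 0)) :
    (∫ p : ℝ, 2 * (deriv g p * ψ p ^ 2 / p ^ 2)) ^ 2 <
      4 * (∫ p : ℝ, ψ p ^ 2 / p ^ 4) *
        (∫ p : ℝ, ℏ ^ 2 * (deriv ψ p) ^ 2 + (deriv g p) ^ 2 * ψ p ^ 2) ∧
    ∀ τ : ℝ,
      0 < (∫ p : ℝ, ψ p ^ 2 / p ^ 4) * τ ^ 2 +
          (∫ p : ℝ, 2 * (deriv g p * ψ p ^ 2 / p ^ 2)) * τ +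
          (∫ p : ℝ, ℏ ^ 2 * (deriv ψ p) ^ 2 + (deriv g p) ^ 2 * ψ p ^ 2) := by
  set f : ℝ → ℝ := fun p => ψ p / p ^ 2 with hfdef
  set h : ℝ → ℝ := fun p => deriv g p * ψ p with hhdef
  have ef2 : (fun p : ℝ => f p ^ 2) = fun p => ψ p ^ 2 / p ^ 4 := by
    funext p; simp only [hfdef]; ring
  have efh : (fun p : ℝ => f p * h p) = fun p => deriv g p * ψ p ^ 2 / p ^ 2 := by
    funext p; simp only [hfdef, hhdef]; ring
  have hf2 : Integrable (fun p : ℝ => f p ^ 2) := by rw [ef2]; exact hA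
  have hfh : Integrable (fun p : ℝ => f p * h p) := by rw [efh]; exact hB
  have cauchy := my_cauchy f h hf2 hgψL2 hfh
  rw [ef2, efh] at cauchy
  -- A > 0
  have hApos : 0 < ∫ p : ℝ, ψ p ^ 2 / p ^ 4 := by
    have := my_int_sq_pos f hf2 ?_
    · rwa [ef2] at this
    · intro hae
      apply hψne
      have h0 : ∀ᵐ p : ℝ ∂volume, p ≠ 0 := by
        rw [ae_iff]
        simpa using Real.volume_singleton (a := (0 : ℝ))
      filter_upwards [hae, h0] with p hp hp0
      simp only [hfdef] at hp
      rcases div_eq_zero_iff.mp hp with h1 | h1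
      · exact h1
      · exact absurd (pow_eq_zero_iff (by norm_num) |>.mp h1) hp0
  -- ∫ ψ'^2 > 0
  have hDpos : 0 < ∫ p : ℝ, (deriv ψ p) ^ 2 := my_int_sq_pos _ hψ'L2 hψ'ne
  -- split C
  have eC : (fun p : ℝ => ℏ ^ 2 * (deriv ψ p) ^ 2 + (deriv g p) ^ 2 * ψ p ^ 2)
      = fun p => ℏ ^ 2 * (deriv ψ p) ^ 2 + (deriv g p * ψ p) ^ 2 := by
    funext p; ring
  have hCsplit : (∫ p : ℝ, ℏ ^ 2 * (deriv ψ p) ^ 2 + (deriv g p) ^ 2 * ψ p ^ 2)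
      = ℏ ^ 2 * (∫ p : ℝ, (deriv ψ p) ^ 2) + ∫ p : ℝ, (deriv g p * ψ p) ^ 2 := by
    rw [eC, integral_add (hψ'L2.const_mul _) hgψL2, integral_const_mul]
  have hBint : (∫ p : ℝ, 2 * (deriv g p * ψ p ^ 2 / p ^ 2))
      = 2 * ∫ p : ℝ, deriv g p * ψ p ^ 2 / p ^ 2 := integral_const_mul _ _
  have hℏ2 : 0 < ℏ ^ 2 * ∫ p : ℝ, (deriv ψ p) ^ 2 :=
    mul_pos (pow_pos hℏ 2) hDpos
  have hdisc : (∫ p : ℝ, 2 * (deriv g p * ψ p ^ 2 / p ^ 2)) ^ 2 <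
      4 * (∫ p : ℝ, ψ p ^ 2 / p ^ 4) *
        (∫ p : ℝ, ℏ ^ 2 * (deriv ψ p) ^ 2 + (deriv g p) ^ 2 * ψ p ^ 2) := by
    rw [hBint, hCsplit]
    nlinarith [cauchy, hApos, hℏ2]
  refine ⟨hdisc, fun τ => ?_⟩
  nlinarith [sq_nonneg (2 * (∫ p : ℝ, ψ p ^ 2 / p ^ 4) * τ +
      (∫ p : ℝ, 2 * (deriv g p * ψ p ^ 2 / p ^ 2))), hdisc, hApos]
end

section
/- Let n ≥ 1 be an integer, σ > 0, and let ψₙ be the normalized state ψₙ(p) = N·pⁿ·exp(−p²/(2σ²)) for p < 0 (zero for p ≥ 0) with N² = 2/(σ^(2n+1)·Γ(n+1/2)). Then ∫_ℝ (ψₙ'(p))² dp = (1/σ²)·(4n−1)/(4n−2). -/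
open MeasureTheory Real Set

lemma mom (σ : ℝ) (hσ : 0 < σ) (m : ℕ) :
    ∫ x in Ioi (0:ℝ), x ^ m * Real.exp (-x ^ 2 / σ ^ 2) =
      σ ^ (m + 1) * (1 / 2) * Real.Gamma ((m + 1) / 2) := by
  have hb : (0:ℝ) < 1 / σ ^ 2 := by positivity
  have key := integral_rpow_mul_exp_neg_mul_rpow (p := 2) (q := (m:ℝ)) (b := 1 / σ ^ 2)
    two_pos (lt_of_lt_of_le neg_one_lt_zero (Nat.cast_nonneg m)) hb
  rw [setIntegral_congr_fun measurableSet_Ioi (g := fun x : ℝ =>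
      x ^ (m:ℝ) * Real.exp (-(1 / σ ^ 2) * x ^ (2:ℝ))) ?_, key]
  · congr 2
    rw [one_div, ← Real.rpow_natCast σ 2, ← Real.rpow_neg_one, ← Real.rpow_natCast σ (m+1),
      ← Real.rpow_mul hσ.le, ← Real.rpow_mul hσ.le]
    · congr 1
      push_cast
      ring
  · intro x hx
    simp only
    rw [← Real.rpow_natCast x m, Real.rpow_two]
    congr 1
    field_simp

lemma momInt (σ : ℝ) (hσ : 0 < σ) (m : ℕ) :
    IntegrableOn (fun x : ℝ => x ^ m * Real.exp (-x ^ 2 / σ ^ 2)) (Ioi 0) := by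
  have hb : (0:ℝ) < 1 / σ ^ 2 := by positivity
  have := integrableOn_rpow_mul_exp_neg_mul_sq hb
    (s := (m:ℝ)) (lt_of_lt_of_le neg_one_lt_zero (Nat.cast_nonneg m))
  refine this.congr_fun (fun x hx => ?_) measurableSet_Ioi
  beta_reduce
  rw [Real.rpow_natCast]
  congr 1
  field_simp

lemma derivAux (N σ : ℝ) (n : ℕ) (p : ℝ) :
    HasDerivAt (fun p : ℝ => N * p ^ n * Real.exp (-p ^ 2 / (2 * σ ^ 2)))
      (N * ((n * p ^ (n - 1)) * Real.exp (-p ^ 2 / (2 * σ ^ 2)) +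
        p ^ n * (Real.exp (-p ^ 2 / (2 * σ ^ 2)) * (-(2 * p) / (2 * σ ^ 2))))) p := by
  have h1 : HasDerivAt (fun p : ℝ => p ^ n) (n * p ^ (n - 1)) p := hasDerivAt_pow n p
  have h2 : HasDerivAt (fun p : ℝ => -p ^ 2 / (2 * σ ^ 2)) (-(2 * p) / (2 * σ ^ 2)) p := by
    simpa using ((hasDerivAt_pow 2 p).neg.div_const (2 * σ ^ 2))
  have h3 := h2.exp
  have := (h1.mul h3).const_mul N
  simpa [mul_assoc] using this

/-- The minimum-area integral for normalized Gaussian physical states: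
`∫ (ψₙ')² dp = (1/σ²)·(4n−1)/(4n−2)`. -/
theorem gaussian_state_deriv_integral (n : ℕ) (hn : 1 ≤ n) (σ : ℝ) (hσ : 0 < σ) :
    let N : ℝ := Real.sqrt (2 / (σ ^ (2 * n + 1) * Real.Gamma ((n : ℝ) + 1 / 2)))
    let ψ : ℝ → ℝ := fun p =>
      if p < 0 then N * p ^ n * Real.exp (-p ^ 2 / (2 * σ ^ 2)) else 0
    ∫ p : ℝ, (deriv ψ p) ^ 2 = (1 / σ ^ 2) * ((4 * (n : ℝ) - 1) / (4 * (n : ℝ) - 2)) := by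
  intro N ψ
  obtain ⟨a, rfl⟩ : ∃ a, n = a + 1 := ⟨n - 1, by omega⟩
  set g : ℝ → ℝ := fun p =>
    N * (((a+1 : ℕ) * p ^ a) * Real.exp (-p ^ 2 / (2 * σ ^ 2)) +
      p ^ (a+1) * (Real.exp (-p ^ 2 / (2 * σ ^ 2)) * (-(2 * p) / (2 * σ ^ 2)))) with hg
  -- derivative on the negative half-line
  have hderiv_neg : ∀ p : ℝ, p < 0 → deriv ψ p = g p := by
    intro p hp
    have hev : ψ =ᶠ[nhds p] (fun q => N * q ^ (a+1) * Real.exp (-q ^ 2 / (2 * σ ^ 2))) :=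
      Filter.eventuallyEq_of_mem (Iio_mem_nhds hp) (fun q hq => if_pos hq)
    rw [hev.deriv_eq, (derivAux N σ (a+1) p).deriv]
    simp [hg]
  have hderiv_pos : ∀ p : ℝ, 0 < p → deriv ψ p = 0 := by
    intro p hp
    have hev : ψ =ᶠ[nhds p] (fun _ => (0:ℝ)) :=
      Filter.eventuallyEq_of_mem (Ioi_mem_nhds hp)
        (fun q hq => if_neg (not_lt.2 (le_of_lt hq)))
    rw [hev.deriv_eq, deriv_const]
  -- reduce to an integral over Iio 0
  have hae : (fun p => (deriv ψ p) ^ 2) =ᵐ[volume]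
      (Iio (0:ℝ)).indicator (fun p => (g p) ^ 2) := by
    have h0 : ∀ᵐ p : ℝ, p ≠ (0:ℝ) := by
      refine ae_iff.2 ?_
      simp only [ne_eq, not_not, setOf_eq_eq_singleton]
      exact Real.volume_singleton
    filter_upwards [h0] with p hp
    rcases hp.lt_or_gt with h | h
    · rw [hderiv_neg p h, Set.indicator_of_mem (by exact h)]
    · rw [hderiv_pos p h, Set.indicator_of_notMem (by simpa using h.le)]
      simp
  rw [integral_congr_ae hae, integral_indicator measurableSet_Iio,
    ← integral_Iic_eq_integral_Iio]
  have hflip := integral_comp_neg_Ioi (0:ℝ) (fun x => (g x) ^ 2)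
  rw [neg_zero] at hflip
  rw [← hflip]
  -- pointwise identity on Ioi 0
  set c : ℝ := (a : ℝ) + 1 with hc
  have hpt : ∀ x ∈ Ioi (0:ℝ), (g (-x)) ^ 2 =
      N ^ 2 * (c ^ 2 * (x ^ (2*a) * Real.exp (-x ^ 2 / σ ^ 2))
        - (2 * c / σ ^ 2) * (x ^ (2*a+2) * Real.exp (-x ^ 2 / σ ^ 2))
        + (1 / σ ^ 4) * (x ^ (2*a+4) * Real.exp (-x ^ 2 / σ ^ 2))) := by
    intro x hx
    have hs : ((-1:ℝ) ^ a) ^ 2 = 1 := by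
      rw [← pow_mul, mul_comm, pow_mul]
      norm_num
    have he2 : Real.exp (-x ^ 2 / (2 * σ ^ 2)) * Real.exp (-x ^ 2 / (2 * σ ^ 2))
        = Real.exp (-x ^ 2 / σ ^ 2) := by
      rw [← Real.exp_add]
      congr 1
      field_simp
      ring
    have hgx : g (-x) = (-1:ℝ) ^ a *
        (N * (c * x ^ a * Real.exp (-x ^ 2 / (2 * σ ^ 2))
          - x ^ (a+1) * Real.exp (-x ^ 2 / (2 * σ ^ 2)) * x / σ ^ 2)) := by
      simp only [hg, hc]
      rw [neg_pow x a, neg_pow x (a+1)]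
      simp only [neg_sq]
      push_cast
      ring
    rw [hgx, mul_pow, hs, one_mul, ← he2]
    ring
  rw [setIntegral_congr_fun measurableSet_Ioi hpt]
  -- linearity
  have i1 : IntegrableOn (fun x : ℝ => c ^ 2 * (x ^ (2*a) * Real.exp (-x ^ 2 / σ ^ 2)))
      (Ioi 0) := (momInt σ hσ (2*a)).const_mul _
  have i2 : IntegrableOn
      (fun x : ℝ => (2 * c / σ ^ 2) * (x ^ (2*a+2) * Real.exp (-x ^ 2 / σ ^ 2)))
      (Ioi 0) := (momInt σ hσ (2*a+2)).const_mul _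
  have i3 : IntegrableOn (fun x : ℝ => (1 / σ ^ 4) * (x ^ (2*a+4) * Real.exp (-x ^ 2 / σ ^ 2)))
      (Ioi 0) := (momInt σ hσ (2*a+4)).const_mul _
  have i12 : IntegrableOn (fun x : ℝ =>
      c ^ 2 * (x ^ (2*a) * Real.exp (-x ^ 2 / σ ^ 2))
        - (2 * c / σ ^ 2) * (x ^ (2*a+2) * Real.exp (-x ^ 2 / σ ^ 2))) (Ioi 0) := i1.sub i2
  rw [integral_const_mul, integral_add i12 i3, integral_sub i1 i2,
    integral_const_mul, integral_const_mul, integral_const_mul,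
    mom σ hσ (2*a), mom σ hσ (2*a+2), mom σ hσ (2*a+4)]
  -- Gamma algebra
  set G : ℝ := Real.Gamma ((a:ℝ) + 1/2) with hG
  have hGpos : 0 < G := Real.Gamma_pos_of_pos (by positivity)
  have hG1 : Real.Gamma (((2*a : ℕ) + 1) / 2) = G := by
    rw [hG]; congr 1; push_cast; ring
  have hG2 : Real.Gamma (((2*a+2 : ℕ) + 1) / 2) = ((a:ℝ) + 1/2) * G := by
    rw [show (((2*a+2 : ℕ) : ℝ) + 1) / 2 = ((a:ℝ) + 1/2) + 1 by push_cast; ring,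
      Real.Gamma_add_one (by positivity), hG]
  have hG3 : Real.Gamma (((2*a+4 : ℕ) + 1) / 2) = ((a:ℝ) + 3/2) * (((a:ℝ) + 1/2) * G) := by
    rw [show (((2*a+4 : ℕ) : ℝ) + 1) / 2 = (((a:ℝ) + 1/2) + 1) + 1 by push_cast; ring,
      Real.Gamma_add_one (by positivity), Real.Gamma_add_one (by positivity), hG]
    ring
  have hN2 : N ^ 2 = 2 / (σ ^ (2*(a+1)+1) * (((a:ℝ) + 1/2) * G)) := by
    have harg : Real.Gamma (((a+1:ℕ) : ℝ) + 1/2) = ((a:ℝ) + 1/2) * G := by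
      rw [show (((a+1:ℕ) : ℝ) + 1/2) = ((a:ℝ) + 1/2) + 1 by push_cast; ring,
        Real.Gamma_add_one (by positivity), hG]
    have hnn : (0:ℝ) ≤ 2 / (σ ^ (2*(a+1)+1) * Real.Gamma (((a+1:ℕ) : ℝ) + 1/2)) := by
      rw [harg]; positivity
    rw [show N = Real.sqrt (2 / (σ ^ (2*(a+1)+1) * Real.Gamma (((a+1:ℕ) : ℝ) + 1/2))) from rfl,
      Real.sq_sqrt hnn, harg]
  rw [hG1, hG2, hG3, hN2]
  -- final algebra
  have hp1 : σ ^ (2*a+2+1) = σ ^ (2*a+1) * σ ^ 2 := by ring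
  have hp2 : σ ^ (2*a+4+1) = σ ^ (2*a+1) * σ ^ 4 := by ring
  have hp3 : σ ^ (2*(a+1)+1) = σ ^ (2*a+1) * σ ^ 2 := by ring
  rw [hp1, hp2, hp3]
  have ht : (0:ℝ) < σ ^ (2*a+1) := by positivity
  have ha2 : ((a:ℝ) + 1/2) ≠ 0 := by positivity
  have h42 : (4 * (a:ℝ) + 2) ≠ 0 := by positivity
  have hσ' : σ ≠ 0 := ne_of_gt hσ
  have hG' : G ≠ 0 := ne_of_gt hGpos
  have ht' : σ ^ (2*a+1) ≠ 0 := ne_of_gt ht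
  push_cast
  rw [hc, show 4*((a:ℝ)+1)-2 = 4*(a:ℝ)+2 by ring]
  field_simp
  ring
end

section
/- On the domain D₀ of smooth functions φ : ℝ → ℂ that, together with all derivatives, decay faster than any power of |p| at infinity and faster than any power of |p|⁻¹ at p = 0, define Â = iℏ d/dp, Q̂ = multiplication by 1/p, and for a real constant α and real parameter τ define the operator F(τ) = Â + α²·(B̂ − τ)·Q̂² where B̂ commutes appropriately. In the simplified case B̂ = 0 (clock reading τ), the second-order Hadamard expansion terminates: denoting [X, Y]₍₀₎ = X, [X,Y]₍ₖ₎ = [[X,Y]₍ₖ₋₁₎, Y], one has [Â², α²Q̂]₍₁₎ = −iℏα²(Â Q̂² + Q̂² Â), [Â², α²Q̂]₍₂₎ = −2ℏ²α⁴ Q̂⁴, and [Â², α²Q̂]₍ₖ₎ = 0 for all k ≥ 3. -/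
/-- Nested (Hadamard) commutators: `c 0 = X`, `c (k+1) = [c k, Y]`. -/
def nestedComm {M : Type*} [AddCommGroup M] [Module ℂ M]
    (X Y : Module.End ℂ M) : ℕ → Module.End ℂ M
  | 0 => X
  | (k + 1) => nestedComm X Y k * Y - Y * nestedComm X Y k

/-- The Hadamard expansion of the area operator `Â²` with respect to the system
Hamiltonian `α²Q̂` (multiplication by `α²/p`) terminates at second order,
given `[Â, Q̂] = −iℏ Q̂²`. -/
theorem area_hadamard_terminates
    {M : Type*} [AddCommGroup M] [Module ℂ M]
    (ℏ α : ℝ) (A Q : Module.End ℂ M)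
    (hAQ : A * Q - Q * A = (-(Complex.I * (ℏ : ℂ))) • (Q * Q)) :
    nestedComm (A * A) (((α : ℂ) ^ 2) • Q) 1 =
        (-(Complex.I * (ℏ : ℂ) * (α : ℂ) ^ 2)) • (A * (Q * Q) + (Q * Q) * A) ∧
    nestedComm (A * A) (((α : ℂ) ^ 2) • Q) 2 =
        (-(2 * (ℏ : ℂ) ^ 2 * (α : ℂ) ^ 4)) • (Q * Q * Q * Q) ∧
    ∀ k : ℕ, 3 ≤ k → nestedComm (A * A) (((α : ℂ) ^ 2) • Q) k = 0 := by
  set e : ℂ := -(Complex.I * (ℏ : ℂ)) with he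
  -- first commutator
  have key1 : A * A * Q - Q * (A * A)
      = A * (A * Q - Q * A) + (A * Q - Q * A) * A := by noncomm_ring
  have h1 : nestedComm (A * A) (((α : ℂ) ^ 2) • Q) 1
      = ((α : ℂ) ^ 2 * e) • (A * (Q * Q) + (Q * Q) * A) := by
    show (A * A) * (((α : ℂ) ^ 2) • Q) - (((α : ℂ) ^ 2) • Q) * (A * A) = _
    rw [mul_smul_comm, smul_mul_assoc, ← smul_sub, key1, hAQ, mul_smul_comm,
      smul_mul_assoc, ← smul_add, smul_smul]
  have h2 : nestedComm (A * A) (((α : ℂ) ^ 2) • Q) 2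
      = ((α : ℂ) ^ 4 * (2 * e * e)) • (Q * Q * Q * Q) := by
    show nestedComm (A * A) (((α : ℂ) ^ 2) • Q) 1 * (((α : ℂ) ^ 2) • Q)
        - (((α : ℂ) ^ 2) • Q) * nestedComm (A * A) (((α : ℂ) ^ 2) • Q) 1 = _
    rw [h1]
    rw [smul_mul_assoc, mul_smul_comm, smul_smul, mul_smul_comm, smul_mul_assoc,
      smul_smul, ← smul_sub]
    have key2 : (A * (Q * Q) + Q * Q * A) * Q - Q * (A * (Q * Q) + Q * Q * A)
        = (A * Q - Q * A) * (Q * Q) + (Q * Q) * (A * Q - Q * A) := by noncomm_ring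
    rw [key2, hAQ, smul_mul_assoc, mul_smul_comm, ← smul_add]
    rw [smul_smul]
    have : Q * Q * (Q * Q) + Q * Q * (Q * Q) = (2 : ℂ) • (Q * Q * Q * Q) := by
      rw [two_smul]; noncomm_ring
    rw [this, smul_smul]
    congr 1
    ring
  refine ⟨?_, ?_, ?_⟩
  · rw [h1]; ring_nf; rw [he]; congr 1; ring
  · rw [h2]
    have : (α : ℂ) ^ 4 * (2 * e * e) = -(2 * (ℏ : ℂ) ^ 2 * (α : ℂ) ^ 4) := by
      rw [he]; ring_nf; rw [Complex.I_sq]; ring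
    rw [this]
  · have h3 : nestedComm (A * A) (((α : ℂ) ^ 2) • Q) 3 = 0 := by
      show nestedComm (A * A) (((α : ℂ) ^ 2) • Q) 2 * (((α : ℂ) ^ 2) • Q)
          - (((α : ℂ) ^ 2) • Q) * nestedComm (A * A) (((α : ℂ) ^ 2) • Q) 2 = 0
      rw [h2, smul_mul_assoc, mul_smul_comm, smul_smul, mul_smul_comm,
        smul_mul_assoc, smul_smul, ← smul_sub]
      have : Q * Q * Q * Q * Q - Q * (Q * Q * Q * Q) = 0 := by noncomm_ring
      rw [mul_comm ((α:ℂ)^4 * (2*e*e)) ((α:ℂ)^2), this, smul_zero]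
    intro k hk
    induction k, hk using Nat.le_induction with
    | base => exact h3
    | succ n hn ih =>
      show nestedComm (A * A) (((α : ℂ) ^ 2) • Q) n * (((α : ℂ) ^ 2) • Q)
          - (((α : ℂ) ^ 2) • Q) * nestedComm (A * A) (((α : ℂ) ^ 2) • Q) n = 0
      rw [ih, zero_mul, mul_zero, sub_zero]
end
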